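/- Non-uniform Isolation Lemma: Let m ≥ 1 and let 𝓕₁, …, 𝓕_{2^m} be (possibly empty) families of subsets of {1,…,m}. Then there exists a sequence w¹, …, w^m of weight assignments {1,…,m} → {1,…,4m} such that for every i ∈ {1,…,2^m} with 𝓕ᵢ nonempty, there exists j ∈ {1,…,m} such that the minimum-weight set of 𝓕ᵢ with respect to w^j is unique. -/

import Mathlib

open Finset

private def wtv {m : ℕ} (f : Fin m → Fin (4 * m)) (F : Finset (Fin m)) : ℕ :=
  ∑ x ∈ F, ((f x : ℕ) + 1)

private def IsGood {m : ℕ} (𝓕 : Finset (Finset (Fin m))) (f : Fin m → Fin (4 * m)) : Prop :=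
  ∃! F : Finset (Fin m), F ∈ 𝓕 ∧ ∀ G ∈ 𝓕, wtv f F ≤ wtv f G

/-- `x` is ambiguous for `f`: two minimum sets, one containing `x`, one not. -/
private def Amb {m : ℕ} (𝓕 : Finset (Finset (Fin m))) (x : Fin m)
    (f : Fin m → Fin (4 * m)) : Prop :=
  ∃ F ∈ 𝓕, ∃ G ∈ 𝓕, x ∈ F ∧ x ∉ G ∧
    (∀ H ∈ 𝓕, wtv f F ≤ wtv f H) ∧ (∀ H ∈ 𝓕, wtv f G ≤ wtv f H)

private lemma notGood_amb {m : ℕ} {𝓕 : Finset (Finset (Fin m))}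
    {f : Fin m → Fin (4 * m)} (h𝓕 : 𝓕.Nonempty) (h : ¬ IsGood 𝓕 f) :
    ∃ x, Amb 𝓕 x f := by
  obtain ⟨F, hF, hFmin⟩ := Finset.exists_min_image 𝓕 (wtv f) h𝓕
  have : ∃ G, (G ∈ 𝓕 ∧ ∀ H ∈ 𝓕, wtv f G ≤ wtv f H) ∧ G ≠ F := by
    by_contra hc
    push_neg at hc
    exact h ⟨F, ⟨hF, hFmin⟩, fun G hG => hc G hG⟩
  obtain ⟨G, ⟨hG, hGmin⟩, hne⟩ := this
  have : ∃ x, ¬ (x ∈ F ↔ x ∈ G) := by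
    by_contra hc
    push_neg at hc
    exact hne ((Finset.ext fun x => (hc x)).symm)
  obtain ⟨x, hx⟩ := this
  by_cases hxF : x ∈ F
  · have hxG : x ∉ G := fun h' => hx ⟨fun _ => h', fun _ => hxF⟩
    exact ⟨x, F, hF, G, hG, hxF, hxG, hFmin, hGmin⟩
  · have hxG : x ∈ G := by
      by_contra h'
      exact hx ⟨fun h'' => absurd h'' hxF, fun h'' => absurd h'' h'⟩
    exact ⟨x, G, hG, F, hF, hxG, hxF, hGmin, hFmin⟩

private lemma amb_key {m : ℕ} {𝓕 : Finset (Finset (Fin m))} {x : Fin m}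
    {u v : Fin m → Fin (4 * m)} (hu : Amb 𝓕 x u) (hv : Amb 𝓕 x v)
    (huv : ∀ y, y ≠ x → u y = v y) : (v x : ℕ) ≤ (u x : ℕ) := by
  obtain ⟨Fu, hFu, Gu, hGu, hxFu, hxGu, hFumin, hGumin⟩ := hu
  obtain ⟨Fv, hFv, Gv, hGv, hxFv, hxGv, hFvmin, hGvmin⟩ := hv
  have hsum' : ∀ S : Finset (Fin m), x ∉ S → wtv u S = wtv v S := by
    intro S hS
    refine Finset.sum_congr rfl fun y hy => ?_
    rw [huv y (fun h => hS (h ▸ hy))]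
  have hu_split : wtv u Fv = ((u x : ℕ) + 1) + ∑ y ∈ Fv.erase x, ((u y : ℕ) + 1) := by
    rw [wtv, ← Finset.add_sum_erase _ _ hxFv]
  have hv_split : wtv v Fv = ((v x : ℕ) + 1) + ∑ y ∈ Fv.erase x, ((v y : ℕ) + 1) := by
    rw [wtv, ← Finset.add_sum_erase _ _ hxFv]
  have herase : ∑ y ∈ Fv.erase x, ((u y : ℕ) + 1) = ∑ y ∈ Fv.erase x, ((v y : ℕ) + 1) := by
    refine Finset.sum_congr rfl fun y hy => ?_
    rw [huv y (Finset.ne_of_mem_erase hy)]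
  have chain : wtv v Fv ≤ wtv u Fv := by
    calc wtv v Fv ≤ wtv v Gu := hFvmin _ hGu
    _ = wtv u Gu := (hsum' _ hxGu).symm
    _ = wtv u Fu := le_antisymm (hGumin _ hFu) (hFumin _ hGu)
    _ ≤ wtv u Fv := hFumin _ hFv
  rw [hu_split, hv_split, herase] at chain
  omega

private lemma amb_determined {m : ℕ} {𝓕 : Finset (Finset (Fin m))} {x : Fin m}
    {f g : Fin m → Fin (4 * m)} (hf : Amb 𝓕 x f) (hg : Amb 𝓕 x g)
    (hfg : ∀ y, y ≠ x → f y = g y) : f = g := by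
  funext y
  by_cases hy : y = x
  · subst hy
    have h1 := amb_key hf hg hfg
    have h2 := amb_key hg hf (fun y hy => (hfg y hy).symm)
    exact Fin.ext (le_antisymm h2 h1)
  · exact hfg y hy
private noncomputable def ambSet {m : ℕ} (𝓕 : Finset (Finset (Fin m))) (x : Fin m) :
    Finset (Fin m → Fin (4 * m)) :=
  @Finset.filter _ (fun f => Amb 𝓕 x f) (Classical.decPred _) univ

private noncomputable def badSet {m : ℕ} (𝓕 : Finset (Finset (Fin m))) :
    Finset (Fin m → Fin (4 * m)) :=
  @Finset.filter _ (fun f => ¬ IsGood 𝓕 f) (Classical.decPred _) univ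

private lemma ambSet_card {m : ℕ} (𝓕 : Finset (Finset (Fin m))) (x : Fin m) :
    (ambSet 𝓕 x).card ≤ (4 * m) ^ (m - 1) := by
  classical
  have hsub : Fintype.card {y : Fin m // y ≠ x} = m - 1 := by
    simp [Fintype.card_subtype_compl]
  have h := Finset.card_le_card_of_injOn
    (s := ambSet 𝓕 x) (t := (univ : Finset ({y : Fin m // y ≠ x} → Fin (4 * m))))
    (fun f (y : {y : Fin m // y ≠ x}) => f y.1)
    (fun f _ => Finset.mem_univ _)
    (by
      intro f hf g hg hfg
      rw [Finset.mem_coe] at hf hg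
      have hf' : Amb 𝓕 x f := by simpa [ambSet] using hf
      have hg' : Amb 𝓕 x g := by simpa [ambSet] using hg
      exact amb_determined hf' hg' (fun y hy => congrFun hfg ⟨y, hy⟩))
  calc (ambSet 𝓕 x).card ≤ (univ : Finset ({y : Fin m // y ≠ x} → Fin (4 * m))).card := h
  _ = (4 * m) ^ (m - 1) := by
      rw [Finset.card_univ, Fintype.card_fun, hsub, Fintype.card_fin]

private lemma badSet_card {m : ℕ} (hm : 1 ≤ m) {𝓕 : Finset (Finset (Fin m))}
    (h𝓕 : 𝓕.Nonempty) : 4 * (badSet 𝓕).card ≤ (4 * m) ^ m := by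
  classical
  have hsub : badSet 𝓕 ⊆ univ.biUnion (fun x => ambSet 𝓕 x) := by
    intro f hf
    have hf' : ¬ IsGood 𝓕 f := by simpa [badSet] using hf
    obtain ⟨x, hx⟩ := notGood_amb h𝓕 hf'
    exact Finset.mem_biUnion.mpr ⟨x, Finset.mem_univ _, by simp [ambSet, hx]⟩
  have h1 : (badSet 𝓕).card ≤ m * (4 * m) ^ (m - 1) := by
    calc (badSet 𝓕).card ≤ (univ.biUnion (fun x => ambSet 𝓕 x)).card :=
          Finset.card_le_card hsub
    _ ≤ ∑ x : Fin m, (ambSet 𝓕 x).card := Finset.card_biUnion_le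
    _ ≤ ∑ _x : Fin m, (4 * m) ^ (m - 1) :=
          Finset.sum_le_sum (fun x _ => ambSet_card 𝓕 x)
    _ = m * (4 * m) ^ (m - 1) := by simp [Finset.sum_const, mul_comm]
  have h2 : (4 * m) ^ m = (4 * m) * (4 * m) ^ (m - 1) := by
    rw [← pow_succ']
    congr 1
    omega
  calc 4 * (badSet 𝓕).card ≤ 4 * (m * (4 * m) ^ (m - 1)) := by omega
  _ = (4 * m) * (4 * m) ^ (m - 1) := by ring
  _ = (4 * m) ^ m := h2.symm
/-- Non-uniform Isolation Lemma: for any `2^m` families of subsets of `{1,…,m}` (`m ≥ 1`),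
there are `m` weight assignments into `{1,…,4m}` such that every nonempty family has,
for some assignment, a unique minimum-weight set. -/
theorem stmt_15 {m : ℕ} (hm : 1 ≤ m)
    (𝓕 : Fin (2 ^ m) → Finset (Finset (Fin m))) :
    ∃ w : Fin m → (Fin m → ℕ),
      (∀ j i, w j i ∈ Finset.Icc 1 (4 * m)) ∧
      ∀ i : Fin (2 ^ m), (𝓕 i).Nonempty →
        ∃ j : Fin m, ∃! F : Finset (Fin m), F ∈ 𝓕 i ∧
          ∀ G ∈ 𝓕 i, ∑ x ∈ F, w j x ≤ ∑ x ∈ G, w j x := by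
  classical
  set S : Finset (Fin (2 ^ m)) := univ.filter (fun i => (𝓕 i).Nonempty) with hS
  set Bad : Fin (2 ^ m) → Finset (Fin m → Fin m → Fin (4 * m)) :=
    fun i => Fintype.piFinset (fun _ : Fin m => badSet (𝓕 i)) with hBad
  have hBadcard : ∀ i ∈ S, 4 ^ m * (Bad i).card ≤ ((4 * m) ^ m) ^ m := by
    intro i hi
    have hne : (𝓕 i).Nonempty := (Finset.mem_filter.mp hi).2
    have h := badSet_card hm hne
    have hc : (Bad i).card = (badSet (𝓕 i)).card ^ m := by
      simp [hBad, Fintype.card_piFinset]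
    rw [hc, ← mul_pow]
    exact Nat.pow_le_pow_left h m
  have hScard : S.card ≤ 2 ^ m := by
    have := Finset.card_filter_le (univ : Finset (Fin (2 ^ m)))
      (fun i => (𝓕 i).Nonempty)
    simpa using this
  set P : ℕ := ((4 * m) ^ m) ^ m with hP
  have hPpos : 0 < P := by
    have : 0 < 4 * m := by omega
    positivity
  have hsum2 : 2 * ∑ i ∈ S, (Bad i).card ≤ P := by
    have h1 : 4 ^ m * ∑ i ∈ S, (Bad i).card ≤ 2 ^ m * P := by
      rw [Finset.mul_sum]
      calc ∑ i ∈ S, 4 ^ m * (Bad i).card ≤ ∑ _i ∈ S, P :=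
            Finset.sum_le_sum hBadcard
      _ = S.card * P := by simp [Finset.sum_const, mul_comm]
      _ ≤ 2 ^ m * P := Nat.mul_le_mul_right P hScard
    have h2 : 2 ^ m * 2 ≤ 4 ^ m := by
      have : (4 : ℕ) ^ m = 2 ^ m * 2 ^ m := by
        rw [← mul_pow]; norm_num
      rw [this]
      exact Nat.mul_le_mul_left _ (Nat.one_lt_two_pow_iff.mpr (by omega))
    have h3 : 2 ^ m * (2 * ∑ i ∈ S, (Bad i).card) ≤ 2 ^ m * P := by
      calc 2 ^ m * (2 * ∑ i ∈ S, (Bad i).card)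
          = (2 ^ m * 2) * ∑ i ∈ S, (Bad i).card := by ring
      _ ≤ 4 ^ m * ∑ i ∈ S, (Bad i).card := Nat.mul_le_mul_right _ h2
      _ ≤ 2 ^ m * P := h1
    exact Nat.le_of_mul_le_mul_left h3 (Nat.pow_pos (by norm_num))
  have hcardlt : (S.biUnion Bad).card < Fintype.card (Fin m → Fin m → Fin (4 * m)) := by
    have hb := Finset.card_biUnion_le (s := S) (t := Bad)
    have hcard : Fintype.card (Fin m → Fin m → Fin (4 * m)) = P := by
      simp [Fintype.card_fun, hP]
    omega
  obtain ⟨W, hW⟩ : ∃ W, W ∉ S.biUnion Bad := by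
    by_contra hc
    push_neg at hc
    have : (univ : Finset (Fin m → Fin m → Fin (4 * m))) ⊆ S.biUnion Bad :=
      fun W _ => hc W
    have := Finset.card_le_card this
    rw [Finset.card_univ] at this
    omega
  refine ⟨fun j i => (W j i : ℕ) + 1, ?_, ?_⟩
  · intro j i
    have := (W j i).is_lt
    simp only [Finset.mem_Icc]
    omega
  · intro i hi
    have hiS : i ∈ S := Finset.mem_filter.mpr ⟨Finset.mem_univ _, hi⟩
    have hWi : W ∉ Bad i := fun h => hW (Finset.mem_biUnion.mpr ⟨i, hiS, h⟩)
    rw [hBad, Fintype.mem_piFinset] at hWi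
    push_neg at hWi
    obtain ⟨j, hj⟩ := hWi
    have hgood : IsGood (𝓕 i) (W j) := by
      by_contra hbad
      exact hj (by simp [badSet, hbad])
    exact ⟨j, by simpa [IsGood, wtv] using hgood⟩
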